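/- arXiv:2509.06634 — 5 statements merged into one kernel-verified Lean document; each statement's English description precedes it below -/
import Mathlib

section
/- Let ℑ be a closed two-sided ideal in a C*-algebra A and let (aₙ) be a sequence in ℑ with Σₙ ‖aₙ‖² ≤ 1. Then there exist b ∈ ℑ with b ≥ 0 and a sequence (cₙ) in ℑ with ‖cₙ‖ ≤ 1 for all n, such that aₙ = b·cₙ for every n. -/
open Filter Topology

noncomputable def q4 : ℝ → ℝ := fun t => Real.sqrt (Real.sqrt t)

lemma q4_nonneg (t : ℝ) : 0 ≤ q4 t := Real.sqrt_nonneg _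

lemma q4_cont : Continuous q4 := Real.continuous_sqrt.comp Real.continuous_sqrt

lemma q4_zero : q4 0 = 0 := by simp [q4]

lemma q4_pow4 {t : ℝ} (ht : 0 ≤ t) : q4 t ^ 4 = t := by
  have h1 : q4 t ^ 4 = (q4 t ^ 2) ^ 2 := by ring
  rw [h1, q4, Real.sq_sqrt (Real.sqrt_nonneg t), Real.sq_sqrt ht]

lemma q4_mono {a b : ℝ} (h : a ≤ b) : q4 a ≤ q4 b :=
  Real.sqrt_le_sqrt (Real.sqrt_le_sqrt h)

lemma estA {t ε u : ℝ} (ht0 : 0 ≤ t) (ht1 : t ≤ 1) (hε : 0 < ε) (hu0 : 0 ≤ u)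
    (hu4 : u ^ 4 = t) : (u ^ 3 / (t + ε)) ^ 2 * t ≤ 1 ^ 2 := by
  have hD : 0 < t + ε := by linarith
  have hu1 : u ≤ 1 := by
    by_contra hc
    push_neg at hc
    have h4 : (1:ℝ) < u ^ 4 := one_lt_pow₀ hc (by norm_num)
    linarith
  have hu2 : u ^ 2 ≤ 1 := by nlinarith [mul_nonneg (sub_nonneg.mpr hu1) hu0]
  have e : (u ^ 3 / (t + ε)) ^ 2 * t = u ^ 6 * t / (t + ε) ^ 2 := by
    rw [div_pow, div_mul_eq_mul_div]
    congr 1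
    ring
  rw [e, one_pow, div_le_one (by positivity)]
  have h2 : u ^ 6 * t = t ^ 2 * u ^ 2 := by linear_combination u ^ 2 * t * hu4
  nlinarith [mul_nonneg (mul_nonneg ht0 ht0) (sub_nonneg.mpr hu2)]

lemma estB {t ε u : ℝ} (ht0 : 0 ≤ t) (hε : 0 < ε) (hu0 : 0 ≤ u)
    (hu4 : u ^ 4 = t) : (u * (u ^ 3 / (t + ε)) - 1) ^ 2 * t ≤ (Real.sqrt ε / 2) ^ 2 := by
  have hD : 0 < t + ε := by linarith
  have e1 : u * (u ^ 3 / (t + ε)) = t / (t + ε) := by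
    rw [mul_div_assoc', show u * u ^ 3 = t from by linear_combination hu4]
  rw [e1, div_pow, Real.sq_sqrt hε.le]
  have e0 : t / (t + ε) - 1 = -ε / (t + ε) := by field_simp; ring
  have e2 : (t / (t + ε) - 1) ^ 2 * t = ε ^ 2 * t / (t + ε) ^ 2 := by
    rw [e0, div_pow, neg_sq, div_mul_eq_mul_div]
  rw [e2, div_le_div_iff₀ (by positivity) (by norm_num)]
  nlinarith [mul_nonneg hε.le (sq_nonneg (t - ε))]

lemma estC1 {t ε u v : ℝ} (ht0 : 0 ≤ t) (hε : 0 < ε) (hu0 : 0 ≤ u)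
    (hu4 : u ^ 4 = t) (hv0 : 0 ≤ v) (hv4 : v ^ 4 = ε) :
    |u ^ 3 / (t + ε) * u ^ 2 - u| ≤ v := by
  have hD : 0 < t + ε := by linarith
  have e : u ^ 3 / (t + ε) * u ^ 2 - u = -(u * ε) / (t + ε) := by
    field_simp
    linear_combination u * hu4
  rw [e, abs_div, abs_of_pos hD, abs_neg, abs_of_nonneg (by positivity), div_le_iff₀ hD]
  have h1 : u * v ^ 3 ≤ u ^ 4 + v ^ 4 := by
    nlinarith [sq_nonneg (u ^ 2 - v ^ 2), mul_nonneg (sq_nonneg v) (sq_nonneg (u - v))]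
  calc u * ε = u * v ^ 3 * v := by rw [← hv4]; ring
    _ ≤ (u ^ 4 + v ^ 4) * v := mul_le_mul_of_nonneg_right h1 hv0
    _ = v * (t + ε) := by rw [← hu4]; linear_combination v * hv4

lemma estC {t ε δ u v w : ℝ} (ht0 : 0 ≤ t) (hε : 0 < ε) (hδ : 0 < δ) (hu0 : 0 ≤ u)
    (hu4 : u ^ 4 = t) (hv0 : 0 ≤ v) (hv4 : v ^ 4 = ε) (hw0 : 0 ≤ w) (hw4 : w ^ 4 = δ) :
    (u ^ 3 / (t + ε) - u ^ 3 / (t + δ)) ^ 2 * t ≤ (v + w) ^ 2 := by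
  have h1 := estC1 ht0 hε hu0 hu4 hv0 hv4
  have h2 := estC1 ht0 hδ hu0 hu4 hw0 hw4
  have key : (u ^ 3 / (t + ε) - u ^ 3 / (t + δ)) ^ 2 * t
      = ((u ^ 3 / (t + ε) * u ^ 2 - u) - (u ^ 3 / (t + δ) * u ^ 2 - u)) ^ 2 := by
    rw [← hu4]; ring
  rw [key]
  have habs : |(u ^ 3 / (t + ε) * u ^ 2 - u) - (u ^ 3 / (t + δ) * u ^ 2 - u)| ≤ v + w := by
    calc |(u ^ 3 / (t + ε) * u ^ 2 - u) - (u ^ 3 / (t + δ) * u ^ 2 - u)|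
        ≤ |u ^ 3 / (t + ε) * u ^ 2 - u| + |u ^ 3 / (t + δ) * u ^ 2 - u| := abs_sub _ _
      _ ≤ v + w := add_le_add h1 h2
  calc ((u ^ 3 / (t + ε) * u ^ 2 - u) - (u ^ 3 / (t + δ) * u ^ 2 - u)) ^ 2
      = |(u ^ 3 / (t + ε) * u ^ 2 - u) - (u ^ 3 / (t + δ) * u ^ 2 - u)| ^ 2 := (sq_abs _).symm
    _ ≤ (v + w) ^ 2 := pow_le_pow_left₀ (abs_nonneg _) habs 2

section CStar

variable {A : Type*} [CStarAlgebra A] [PartialOrder A] [StarOrderedRing A]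

/-- key norm estimate: if `x * x* ≤ s` then `‖cfc h s * x‖² ≤ sup h(t)² t`. -/
lemma keyNorm (s x : A) (hs : 0 ≤ s) (hxs : x * star x ≤ s) (h : ℝ → ℝ)
    (hcont : ContinuousOn h (spectrum ℝ s)) (M : ℝ) (hM : 0 ≤ M)
    (hb : ∀ t ∈ spectrum ℝ s, (h t) ^ 2 * t ≤ M ^ 2) : ‖cfc h s * x‖ ≤ M := by
  have hsa : IsSelfAdjoint s := .of_nonneg hs
  set c := cfc h s with hc_def
  have hc : IsSelfAdjoint c := cfc_predicate h s
  have h2 : (c * x) * star (c * x) = c * (x * star x) * star c := by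
    rw [star_mul]; simp only [mul_assoc]
  have h3 : c * (x * star x) * star c ≤ c * s * star c := star_right_conjugate_le_conjugate hxs c
  have h4 : (0 : A) ≤ c * (x * star x) * star c := star_right_conjugate_nonneg (mul_star_self_nonneg x) c
  have h6 : cfc (fun t => h t * t * h t) s = c * s * star c := by
    rw [cfc_mul (fun t => h t * t) h s (hcont.mul (continuous_id.continuousOn)) hcont,
      cfc_mul h (fun t => t) s hcont (continuous_id.continuousOn), cfc_id' ℝ s, hc.star_eq]
  have h7 : ‖cfc (fun t => h t * t * h t) s‖ ≤ M ^ 2 := by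
    refine norm_cfc_le (by positivity) fun t ht => ?_
    have h0t : 0 ≤ t := spectrum_nonneg_of_nonneg hs ht
    rw [Real.norm_eq_abs, abs_of_nonneg (by nlinarith [sq_nonneg (h t)])]
    calc h t * t * h t = h t ^ 2 * t := by ring
      _ ≤ M ^ 2 := hb t ht
  have h8 : ‖c * x‖ ^ 2 ≤ M ^ 2 := by
    calc ‖c * x‖ ^ 2 = ‖(c * x) * star (c * x)‖ := by rw [CStarRing.norm_self_mul_star]; ring
      _ = ‖c * (x * star x) * star c‖ := by rw [h2]
      _ ≤ ‖c * s * star c‖ := CStarAlgebra.norm_le_norm_of_nonneg_of_le (a := _) h4 h3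
      _ = ‖cfc (fun t => h t * t * h t) s‖ := by rw [h6]
      _ ≤ M ^ 2 := h7
  nlinarith [norm_nonneg (c * x)]

lemma tsum_nonneg' (f : ℕ → A) (h : ∀ n, 0 ≤ f n) : 0 ≤ ∑' n, f n := by
  by_cases hf : Summable f
  · have hcl : IsClosed {x : A | 0 ≤ x} := isClosed_le continuous_const continuous_id
    exact hcl.mem_of_tendsto hf.hasSum.tendsto_sum_nat
      (.of_forall fun N => Finset.sum_nonneg fun i _ => h i)
  · rw [tsum_eq_zero_of_not_summable hf]

lemma cfc_mem_ideal [Nontrivial A] (I : TwoSidedIdeal A) (hI : IsClosed (I : Set A))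
    (s : A) (hs : 0 ≤ s) (hsI : s ∈ I) (f : ℝ → ℝ) (hf : Continuous f) (hf0 : f 0 = 0) :
    cfc f s ∈ I := by
  have hsa : IsSelfAdjoint s := .of_nonneg hs
  have hmem : cfc f s ∈ closure (I : Set A) := by
    rw [Metric.mem_closure_iff]
    intro ε hε
    obtain ⟨p, hp⟩ := exists_polynomial_near_of_continuousOn 0 ‖s‖ f hf.continuousOn (ε / 4)
      (by positivity)
    set q : Polynomial ℝ := p - Polynomial.C (p.eval 0) with hq
    have hq0 : q.eval 0 = 0 := by simp [hq]
    have hqmem : (Polynomial.aeval s q : A) ∈ I := by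
      have hco : q.coeff 0 = 0 := by
        rw [Polynomial.coeff_zero_eq_eval_zero]; exact hq0
      obtain ⟨r, hr⟩ := Polynomial.X_dvd_iff.mpr hco
      rw [hr, map_mul, Polynomial.aeval_X]
      exact I.mul_mem_right _ _ hsI
    refine ⟨Polynomial.aeval s q, hqmem, ?_⟩
    have hp0 : |p.eval 0 - f 0| < ε / 4 := hp 0 (Set.mem_Icc.mpr ⟨le_rfl, norm_nonneg s⟩)
    rw [dist_eq_norm, ← cfc_polynomial q s, ← cfc_sub f q.eval s hf.continuousOn
      q.continuous.continuousOn]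
    have hb : ‖cfc (fun t => f t - q.eval t) s‖ ≤ ε / 2 := by
      refine norm_cfc_le (by positivity) fun t ht => ?_
      have h0t : 0 ≤ t := spectrum_nonneg_of_nonneg hs ht
      have h1t : t ≤ ‖s‖ :=
        le_trans (Real.le_norm_self t) (spectrum.norm_le_norm_of_mem ht)
      have hpt : |p.eval t - f t| < ε / 4 := hp t ⟨h0t, h1t⟩
      have hqe : q.eval t = p.eval t - p.eval 0 := by simp [hq]
      rw [Real.norm_eq_abs, hqe]
      rw [hf0] at hp0
      have hpt' : |f t - p.eval t| < ε / 4 := abs_sub_comm (p.eval t) (f t) ▸ hpt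
      calc |f t - (p.eval t - p.eval 0)| = |(f t - p.eval t) + (p.eval 0 - 0)| := by
            congr 1; ring
        _ ≤ |f t - p.eval t| + |p.eval 0 - 0| := abs_add_le _ _
        _ ≤ ε / 4 + ε / 4 := add_le_add hpt'.le hp0.le
        _ = ε / 2 := by ring
    exact lt_of_le_of_lt hb (by linarith)
  rwa [hI.closure_eq] at hmem

end CStar


noncomputable def ee : ℕ → ℝ := fun k => 1 / ((k : ℝ) + 1)

lemma ee_pos (k : ℕ) : 0 < ee k := by unfold ee; positivity

noncomputable def gg (k : ℕ) : ℝ → ℝ := fun t => (q4 t) ^ 3 / (t + ee k)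

/-- Kadison–Ringrose, Exercise 4.6.40: factorization of a square-summable
sequence in a closed two-sided ideal of a C*-algebra. -/
theorem stmt4 {A : Type*} [NormedRing A] [StarRing A] [CStarRing A] [CompleteSpace A]
    [NormedAlgebra ℂ A] [StarModule ℂ A] [PartialOrder A] [StarOrderedRing A]
    (I : TwoSidedIdeal A) (hI : IsClosed (I : Set A))
    (a : ℕ → A) (ha : ∀ n, a n ∈ I)
    (hsum : Summable fun n => ‖a n‖ ^ 2) (hle : (∑' n, ‖a n‖ ^ 2) ≤ 1) :
    ∃ b : A, b ∈ I ∧ 0 ≤ b ∧ ∃ c : ℕ → A,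
      ∀ n, c n ∈ I ∧ ‖c n‖ ≤ 1 ∧ a n = b * c n := by
  by_cases htriv : Subsingleton A
  · exact ⟨0, I.zero_mem, le_refl 0, fun _ => 0,
      fun n => ⟨I.zero_mem, by simp, Subsingleton.elim _ _⟩⟩
  have : Nontrivial A := not_subsingleton_iff_nontrivial.mp htriv
  letI : CStarAlgebra A := { ‹NormedRing A›, ‹StarRing A›, ‹CStarRing A›, ‹NormedAlgebra ℂ A›,
    ‹StarModule ℂ A› with complete := ‹CompleteSpace A›.complete }
  have hnormsq : ∀ n, ‖a n * star (a n)‖ = ‖a n‖ ^ 2 := fun n => by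
    rw [CStarRing.norm_self_mul_star, sq]
  have hsum' : Summable (fun n => a n * star (a n)) := by
    apply Summable.of_norm
    simpa only [hnormsq] using hsum
  set s : A := ∑' n, a n * star (a n) with hs_def
  have hs0 : 0 ≤ s := tsum_nonneg' _ fun n => mul_star_self_nonneg _
  have hsa : IsSelfAdjoint s := .of_nonneg hs0
  have hsI : s ∈ I := by
    refine hI.mem_of_tendsto hsum'.hasSum.tendsto_sum_nat (.of_forall fun N => ?_)
    exact I.finsetSum_mem _ _ fun i _ => I.mul_mem_right _ _ (ha i)
  have hsnorm : ‖s‖ ≤ 1 := by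
    refine le_trans (norm_tsum_le_tsum_norm (by simpa only [hnormsq] using hsum)) ?_
    calc ∑' n, ‖a n * star (a n)‖ = ∑' n, ‖a n‖ ^ 2 := tsum_congr hnormsq
      _ ≤ 1 := hle
  have hsp0 : ∀ t ∈ spectrum ℝ s, 0 ≤ t := fun t ht => spectrum_nonneg_of_nonneg hs0 ht
  have hsp1 : ∀ t ∈ spectrum ℝ s, t ≤ 1 := fun t ht =>
    le_trans (le_trans (Real.le_norm_self t) (spectrum.norm_le_norm_of_mem ht)) hsnorm
  set b : A := cfc q4 s with hb_def
  have hb0 : 0 ≤ b := cfc_nonneg fun t _ => q4_nonneg t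
  have hbI : b ∈ I := cfc_mem_ideal I hI s hs0 hsI q4 q4_cont q4_zero
  have hgc : ∀ k, ContinuousOn (gg k) (spectrum ℝ s) := by
    intro k
    apply ContinuousOn.div ((q4_cont.pow 3).continuousOn)
      ((continuous_id.add continuous_const).continuousOn)
    intro t ht
    have h1 := hsp0 t ht
    have h2 := ee_pos k
    show t + ee k ≠ 0
    positivity
  have hxs : ∀ n, a n * star (a n) ≤ s := by
    intro n
    rw [hs_def, hsum'.tsum_eq_add_tsum_ite n]
    refine le_add_of_nonneg_right (tsum_nonneg' _ fun m => ?_)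
    by_cases hm : m = n <;> simp [hm, mul_star_self_nonneg]
  have hq4e : ∀ k, q4 (ee k) ^ 4 = ee k := fun k => q4_pow4 (ee_pos k).le
  have htendee : Filter.Tendsto (fun k : ℕ => ee k) atTop (𝓝 0) :=
    tendsto_one_div_add_atTop_nhds_zero_nat
  have main : ∀ n, ∃ cn : A, cn ∈ I ∧ ‖cn‖ ≤ 1 ∧ a n = b * cn := by
    intro n
    set d : ℕ → A := fun k => cfc (gg k) s * a n with hd_def
    have hdI : ∀ k, d k ∈ I := fun k => I.mul_mem_left _ _ (ha n)
    have hdnorm : ∀ k, ‖d k‖ ≤ 1 := by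
      intro k
      refine keyNorm s (a n) hs0 (hxs n) (gg k) (hgc k) 1 zero_le_one fun t ht => ?_
      exact estA (hsp0 t ht) (hsp1 t ht) (ee_pos k) (q4_nonneg t) (q4_pow4 (hsp0 t ht))
    have hdcauchy : CauchySeq d := by
      refine cauchySeq_of_le_tendsto_0 (fun N => 2 * q4 (ee N)) (fun k l N hk hl => ?_) ?_
      · have hkl : ‖d k - d l‖ ≤ q4 (ee k) + q4 (ee l) := by
          have hsub : d k - d l = cfc (fun t => gg k t - gg l t) s * a n := by
            rw [cfc_sub _ _ s (hgc k) (hgc l), sub_mul]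
          rw [hsub]
          refine keyNorm s (a n) hs0 (hxs n) _ ((hgc k).sub (hgc l)) _
            (by have := q4_nonneg (ee k); have := q4_nonneg (ee l); positivity)
            fun t ht => ?_
          exact estC (hsp0 t ht) (ee_pos k) (ee_pos l) (q4_nonneg t) (q4_pow4 (hsp0 t ht))
            (q4_nonneg _) (hq4e k) (q4_nonneg _) (hq4e l)
        have heek : ee k ≤ ee N := by
          apply one_div_le_one_div_of_le (by positivity)
          have : (N : ℝ) ≤ (k : ℝ) := Nat.cast_le.mpr hk
          linarith
        have heel : ee l ≤ ee N := by
          apply one_div_le_one_div_of_le (by positivity)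
          have : (N : ℝ) ≤ (l : ℝ) := Nat.cast_le.mpr hl
          linarith
        have h1 := q4_mono heek
        have h2 := q4_mono heel
        rw [dist_eq_norm]
        calc ‖d k - d l‖ ≤ q4 (ee k) + q4 (ee l) := hkl
          _ ≤ 2 * q4 (ee N) := by linarith
      · have h0 : Filter.Tendsto (fun N : ℕ => q4 (ee N)) atTop (𝓝 0) := by
          have h2 := (q4_cont.tendsto 0).comp htendee
          simpa [Function.comp_def, q4_zero] using h2
        simpa using h0.const_mul 2
    obtain ⟨cn, hcn⟩ := cauchySeq_tendsto_of_complete hdcauchy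
    refine ⟨cn, ?_, ?_, ?_⟩
    · exact hI.mem_of_tendsto hcn (.of_forall hdI)
    · exact le_of_tendsto hcn.norm (.of_forall hdnorm)
    · have hbk : ∀ k, ‖b * d k - a n‖ ≤ Real.sqrt (ee k) / 2 := by
        intro k
        have h1 : b * d k = cfc (fun t => q4 t * gg k t) s * a n := by
          rw [hd_def]
          dsimp only
          rw [← mul_assoc, hb_def, ← cfc_mul q4 (gg k) s q4_cont.continuousOn (hgc k)]
        have h2 : cfc (fun t => q4 t * gg k t - 1) s
            = cfc (fun t => q4 t * gg k t) s - 1 := by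
          rw [cfc_sub (fun t => q4 t * gg k t) (fun _ => (1:ℝ)) s ((q4_cont.continuousOn).mul (hgc k)) continuousOn_const,
            cfc_const_one ℝ s]
        have h3 : b * d k - a n = cfc (fun t => q4 t * gg k t - 1) s * a n := by
          rw [h2, sub_mul, one_mul, h1]
        rw [h3]
        refine keyNorm s (a n) hs0 (hxs n) _
          ((q4_cont.continuousOn.mul (hgc k)).sub continuousOn_const) _
          (by positivity) fun t ht => ?_
        exact estB (hsp0 t ht) (ee_pos k) (q4_nonneg t) (q4_pow4 (hsp0 t ht))
      have htend : Filter.Tendsto (fun k => b * d k) atTop (𝓝 (a n)) := by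
        rw [tendsto_iff_norm_sub_tendsto_zero]
        refine squeeze_zero (fun k => norm_nonneg _) hbk ?_
        have h2 := (Real.continuous_sqrt.tendsto 0).comp htendee
        simp only [Function.comp_def, Real.sqrt_zero] at h2
        simpa using h2.div_const 2
      have htend2 : Filter.Tendsto (fun k => b * d k) atTop (𝓝 (b * cn)) := hcn.const_mul b
      exact tendsto_nhds_unique htend htend2
  choose c hc1 hc2 hc3 using main
  exact ⟨b, hbI, hb0, c, fun n => ⟨hc1 n, hc2 n, hc3 n⟩⟩
end

section
/- Let φ : A → B be a surjective *-homomorphism of C*-algebras and let (bⱼ) be a sequence of positive elements of B with bⱼbₖ = 0 for j ≠ k. Then there is a sequence (aⱼ) of positive elements of A with aⱼaₖ = 0 for j ≠ k and φ(aⱼ) = bⱼ for every j. -/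
open scoped NNReal
open Filter Function

/-! Auxiliary real-valued function lemmas -/

noncomputable def myQ : ℝ → ℝ := fun s => Real.sqrt (Real.sqrt s)
lemma myQ_cont : Continuous myQ := Real.continuous_sqrt.comp Real.continuous_sqrt
lemma myQ_nonneg (s : ℝ) : 0 ≤ myQ s := Real.sqrt_nonneg _
lemma myQ_pow4 {s : ℝ} (hs : 0 ≤ s) : myQ s ^ 4 = s := by
  have : myQ s ^ 4 = (myQ s ^ 2) ^ 2 := by ring
  rw [this, myQ, Real.sq_sqrt (Real.sqrt_nonneg s), Real.sq_sqrt hs]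
lemma myQ_sq (s : ℝ) : myQ s ^ 2 = Real.sqrt s := by
  rw [myQ, Real.sq_sqrt (Real.sqrt_nonneg s)]
lemma myQ_mono : Monotone myQ := fun a b hab =>
  Real.sqrt_le_sqrt (Real.sqrt_le_sqrt hab)
lemma myQ_pos {s : ℝ} (hs : 0 < s) : 0 < myQ s :=
  Real.sqrt_pos.mpr (Real.sqrt_pos.mpr hs)

noncomputable def myG : ℝ → ℝ → ℝ := fun e s => myQ s ^ 3 / max s e

lemma myG_cont {e : ℝ} (he : 0 < e) : Continuous (myG e) := by
  apply Continuous.div ((myQ_cont.pow 3)) (continuous_id.max continuous_const)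
  intro s
  exact ne_of_gt (lt_of_lt_of_le he (le_max_right _ _))

lemma myG_nonneg {e s : ℝ} (he : 0 < e) (hs : 0 ≤ s) : 0 ≤ myG e s := by
  apply div_nonneg (pow_nonneg (myQ_nonneg s) 3)
  exact le_trans he.le (le_max_right _ _)

lemma myG_le {e s : ℝ} (he : 0 < e) (hs : 0 < s) : myG e s ≤ 1 / myQ s := by
  have hq : 0 < myQ s := myQ_pos hs
  have h1 : myQ s ^ 3 / max s e ≤ myQ s ^ 3 / s :=
    div_le_div_of_nonneg_left (by positivity) hs (le_max_left _ _)
  have h2 : myQ s ^ 3 / s = 1 / myQ s := by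
    rw [div_eq_div_iff (ne_of_gt hs) (ne_of_gt hq), one_mul]
    exact myQ_pow4 hs.le
  exact h1.trans_eq h2

lemma est1 {e1 e2 E s : ℝ} (h1 : 0 < e1) (h2 : 0 < e2) (h1E : e1 ≤ E) (h2E : e2 ≤ E)
    (hs : 0 ≤ s) : (myG e1 s - myG e2 s) ^ 2 * s ≤ Real.sqrt E := by
  have hE : 0 ≤ Real.sqrt E := Real.sqrt_nonneg _
  rcases le_or_gt E s with hEs | hsE
  · have m1 : max s e1 = s := max_eq_left (h1E.trans hEs)
    have m2 : max s e2 = s := max_eq_left (h2E.trans hEs)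
    rw [myG, myG, m1, m2]
    simp [hE]
  · rcases eq_or_lt_of_le hs with rfl | hs0
    · simpa using hE
    · have hq : 0 < myQ s := myQ_pos hs0
      have b1 : myG e1 s ≤ 1 / myQ s := myG_le h1 hs0
      have b2 : myG e2 s ≤ 1 / myQ s := myG_le h2 hs0
      have n1 : 0 ≤ myG e1 s := myG_nonneg h1 hs
      have n2 : 0 ≤ myG e2 s := myG_nonneg h2 hs
      have habs : |myG e1 s - myG e2 s| ≤ 1 / myQ s := by
        rw [abs_sub_le_iff]
        constructor
        · linarith
        · linarith
      have hsq : (myG e1 s - myG e2 s) ^ 2 ≤ (1 / myQ s) ^ 2 := by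
        rw [← sq_abs]
        exact pow_le_pow_left₀ (abs_nonneg _) habs 2
      have key : (1 / myQ s) ^ 2 * s = Real.sqrt s := by
        have h2 := myQ_sq s
        have h4 := myQ_pow4 hs
        set r := Real.sqrt s with hr
        set q := myQ s with hqd
        rw [← h4, ← h2]
        have hq' : q ≠ 0 := ne_of_gt hq
        field_simp
      calc (myG e1 s - myG e2 s) ^ 2 * s ≤ (1 / myQ s) ^ 2 * s :=
            mul_le_mul_of_nonneg_right hsq hs
        _ = Real.sqrt s := key
        _ ≤ Real.sqrt E := Real.sqrt_le_sqrt hsE.le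

lemma myG_mul_q {e s : ℝ} (hs : 0 ≤ s) : myG e s * myQ s = s / max s e := by
  rw [myG, div_mul_eq_mul_div, ← pow_succ, myQ_pow4 hs]

lemma est2 {e s : ℝ} (he : 0 < e) (hs : 0 ≤ s) :
    (myG e s * myQ s - 1) ^ 2 * s ≤ e := by
  rw [myG_mul_q hs]
  rcases le_or_gt e s with hes | hse
  · have hs0 : 0 < s := lt_of_lt_of_le he hes
    rw [max_eq_left hes, div_self (ne_of_gt hs0)]
    simpa using he.le
  · rw [max_eq_right hse.le]
    have h1 : 0 ≤ s / e := div_nonneg hs he.le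
    have h2 : s / e ≤ 1 := (div_le_one he).mpr hse.le
    have h3 : (s / e - 1) ^ 2 ≤ 1 := by nlinarith
    calc (s / e - 1) ^ 2 * s ≤ 1 * s := mul_le_mul_of_nonneg_right h3 hs
      _ = s := one_mul s
      _ ≤ e := hse.le


section OneAlg

variable {A : Type*} [CStarAlgebra A] [PartialOrder A] [StarOrderedRing A]

lemma mul_sqrt_zero {x t : A} (ht : 0 ≤ t) (h : x * t = 0) : x * CFC.sqrt t = 0 := by
  have hs : IsSelfAdjoint (CFC.sqrt t) := IsSelfAdjoint.of_nonneg (CFC.sqrt_nonneg _)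
  have key : (x * CFC.sqrt t) * star (x * CFC.sqrt t) = 0 := by
    rw [star_mul, hs.star_eq, mul_assoc, ← mul_assoc (CFC.sqrt t),
      CFC.sqrt_mul_sqrt_self t ht, ← mul_assoc, h, zero_mul]
  have h2 : ‖x * CFC.sqrt t‖ * ‖x * CFC.sqrt t‖ = 0 := by
    rw [← CStarRing.norm_self_mul_star, key, norm_zero]
  simpa [norm_eq_zero, mul_self_eq_zero] using h2

lemma sqrt_mul_zero {x t : A} (ht : 0 ≤ t) (h : t * x = 0) : CFC.sqrt t * x = 0 := by
  have ht' : IsSelfAdjoint t := IsSelfAdjoint.of_nonneg ht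
  have hs : IsSelfAdjoint (CFC.sqrt t) := IsSelfAdjoint.of_nonneg (CFC.sqrt_nonneg _)
  have h1 : star x * t = 0 := by
    have := congrArg star h
    rwa [star_mul, ht'.star_eq, star_zero] at this
  have h2 := mul_sqrt_zero ht h1
  have := congrArg star h2
  rwa [star_mul, hs.star_eq, star_star, star_zero] at this

lemma smul_nonneg'' {r : ℝ} (hr : 0 ≤ r) {x : A} (hx : 0 ≤ x) : 0 ≤ r • x := by
  have key : r • x = star (Real.sqrt r • CFC.sqrt x) * (Real.sqrt r • CFC.sqrt x) := by
    have hs : IsSelfAdjoint (CFC.sqrt x) := IsSelfAdjoint.of_nonneg (CFC.sqrt_nonneg _)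
    rw [star_smul, hs.star_eq, star_trivial, smul_mul_smul_comm,
      CFC.sqrt_mul_sqrt_self x hx, Real.mul_self_sqrt hr]
  rw [key]
  exact star_mul_self_nonneg _


lemma sqrt_eq_cfc_real {t : A} (ht : 0 ≤ t) : CFC.sqrt t = cfc Real.sqrt t := by
  have ht' : IsSelfAdjoint t := IsSelfAdjoint.of_nonneg ht
  refine CFC.sqrt_unique ?_ (cfc_nonneg fun s _ => Real.sqrt_nonneg s)
  rw [← cfc_mul Real.sqrt Real.sqrt t (by fun_prop) (by fun_prop)]
  have : cfc (fun s => Real.sqrt s * Real.sqrt s) t = cfc (id : ℝ → ℝ) t :=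
    cfc_congr fun s hs => Real.mul_self_sqrt (spectrum_nonneg_of_nonneg ht hs)
  rw [this, cfc_id ℝ t]

lemma cfc_myQ_eq {t : A} (ht : 0 ≤ t) : cfc myQ t = CFC.sqrt (CFC.sqrt t) := by
  rw [sqrt_eq_cfc_real (CFC.sqrt_nonneg (a := t)), sqrt_eq_cfc_real ht,
    ← cfc_comp' Real.sqrt Real.sqrt t (by fun_prop) (by fun_prop)]
  rfl

lemma norm_mul_cfc_sq {x T : A} (hT : 0 ≤ T) (hle : star x * x ≤ T) (f : ℝ → ℝ)
    (hf : Continuous f) {c : ℝ} (hc : 0 ≤ c)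
    (hbound : ∀ s ∈ spectrum ℝ T, f s ^ 2 * s ≤ c) : ‖x * cfc f T‖ ^ 2 ≤ c := by
  have hT' : IsSelfAdjoint T := IsSelfAdjoint.of_nonneg hT
  have hfT : IsSelfAdjoint (cfc f T) := cfc_predicate f T
  set y := x * cfc f T with hy
  have h1 : star y * y = cfc f T * (star x * x) * cfc f T := by
    rw [hy, star_mul, hfT.star_eq]; simp [mul_assoc]
  have h2 : star y * y ≤ cfc f T * T * cfc f T := by
    have := star_left_conjugate_le_conjugate hle (cfc f T)
    rwa [hfT.star_eq, ← h1] at this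
  have h3 : cfc (fun s => f s ^ 2 * s) T = cfc f T * T * cfc f T := by
    have e1 : cfc (fun s => f s ^ 2 * s) T = cfc (fun s => f s * s * f s) T :=
      cfc_congr fun s _ => by ring
    rw [e1, cfc_mul _ f T (by fun_prop) (by fun_prop),
      cfc_mul f (fun s => s) T (by fun_prop) (by fun_prop), cfc_id' ℝ T hT']
  have h4 : ‖star y * y‖ ≤ c := by
    refine le_trans (CStarAlgebra.norm_le_norm_of_nonneg_of_le (star_mul_self_nonneg y)
      (h3 ▸ h2)) ?_
    refine norm_cfc_le hc fun s hs => ?_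
    have hs0 : 0 ≤ s := spectrum_nonneg_of_nonneg hT hs
    rw [Real.norm_eq_abs, abs_of_nonneg (by positivity)]
    exact hbound s hs
  calc ‖y‖ ^ 2 = ‖star y * y‖ := by rw [CStarRing.norm_star_mul_self, sq]
    _ ≤ c := h4


lemma cfc_abs_eq_sqrt {h : A} (hh : IsSelfAdjoint h) :
    cfc (fun s : ℝ => |s|) h = CFC.sqrt (h * h) := by
  have hsq : 0 ≤ h * h := by
    nth_rewrite 1 [← hh.star_eq]
    exact star_mul_self_nonneg h
  have h1 : h * h = cfc (fun s : ℝ => s * s) h := by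
    rw [cfc_mul (fun s : ℝ => s) (fun s : ℝ => s) h (by fun_prop) (by fun_prop), cfc_id' ℝ h hh]
  rw [sqrt_eq_cfc_real hsq, h1, ← cfc_comp' Real.sqrt (fun s : ℝ => s * s) h
    (by fun_prop) (by fun_prop) hh]
  exact cfc_congr fun s _ => (Real.sqrt_mul_self_eq_abs s).symm


lemma pedersen {x T : A} (hT : 0 ≤ T) (hle : star x * x ≤ T) :
    ∃ u : A, x = u * cfc myQ T := by
  have hT' : IsSelfAdjoint T := IsSelfAdjoint.of_nonneg hT
  set e : ℕ → ℝ := fun n => 1 / (n + 1) with he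
  have hepos : ∀ n : ℕ, 0 < e n := fun n => by positivity
  have hemono : ∀ {N n : ℕ}, N ≤ n → e n ≤ e N := fun {N n} h => by
    apply one_div_le_one_div_of_le (by positivity)
    have : (N : ℝ) ≤ n := by exact_mod_cast h
    linarith
  set u : ℕ → A := fun n => x * cfc (myG (e n)) T with hu
  have hdiff : ∀ n m : ℕ, u n - u m = x * cfc (fun s => myG (e n) s - myG (e m) s) T := by
    intro n m
    rw [hu, cfc_sub (myG (e n)) (myG (e m)) T ((myG_cont (hepos n)).continuousOn)
      ((myG_cont (hepos m)).continuousOn), mul_sub]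
  have hbound : ∀ N n m : ℕ, N ≤ n → N ≤ m → dist (u n) (u m) ≤ myQ (e N) := by
    intro N n m hn hm
    rw [dist_eq_norm, hdiff]
    have hcont : Continuous (fun s => myG (e n) s - myG (e m) s) :=
      (myG_cont (hepos n)).sub (myG_cont (hepos m))
    have h2 : ‖x * cfc (fun s => myG (e n) s - myG (e m) s) T‖ ^ 2 ≤ Real.sqrt (e N) :=
      norm_mul_cfc_sq hT hle _ hcont (Real.sqrt_nonneg _) (fun s hs =>
        est1 (hepos n) (hepos m) (hemono hn) (hemono hm) (spectrum_nonneg_of_nonneg hT hs))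
    have h3 := Real.sqrt_le_sqrt h2
    rwa [Real.sqrt_sq (norm_nonneg _)] at h3
  have htend0 : Tendsto (fun N : ℕ => myQ (e N)) atTop (nhds 0) := by
    have h1 : Tendsto e atTop (nhds 0) := tendsto_one_div_add_atTop_nhds_zero_nat
    have h2 := (myQ_cont.tendsto 0).comp h1
    have : myQ 0 = 0 := by simp [myQ]
    rwa [this] at h2
  have hcauchy : CauchySeq u :=
    cauchySeq_of_le_tendsto_0 (fun N => myQ (e N)) (fun n m N hn hm => hbound N n m hn hm) htend0
  obtain ⟨v, hv⟩ := cauchySeq_tendsto_of_complete hcauchy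
  refine ⟨v, ?_⟩
  have h1 : Tendsto (fun n => u n * cfc myQ T) atTop (nhds (v * cfc myQ T)) :=
    hv.mul_const _
  have heq : ∀ n, u n * cfc myQ T - x = x * cfc (fun s => myG (e n) s * myQ s - 1) T := by
    intro n
    rw [cfc_sub (fun s => myG (e n) s * myQ s) (fun _ => 1) T
      (((myG_cont (hepos n)).mul myQ_cont).continuousOn) continuousOn_const,
      cfc_const_one ℝ T hT',
      cfc_mul (myG (e n)) myQ T ((myG_cont (hepos n)).continuousOn) myQ_cont.continuousOn,
      mul_sub, mul_one, hu, mul_assoc]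
  have h2 : Tendsto (fun n => u n * cfc myQ T) atTop (nhds x) := by
    rw [tendsto_iff_norm_sub_tendsto_zero]
    have hb : ∀ n, ‖u n * cfc myQ T - x‖ ≤ Real.sqrt (e n) := by
      intro n
      rw [heq n]
      have hcont : Continuous (fun s => myG (e n) s * myQ s - 1) :=
        ((myG_cont (hepos n)).mul myQ_cont).sub continuous_const
      have h2 : ‖x * cfc (fun s => myG (e n) s * myQ s - 1) T‖ ^ 2 ≤ e n :=
        norm_mul_cfc_sq hT hle _ hcont (hepos n).le (fun s hs =>
          est2 (hepos n) (spectrum_nonneg_of_nonneg hT hs))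
      have h3 := Real.sqrt_le_sqrt h2
      rwa [Real.sqrt_sq (norm_nonneg _)] at h3
    have hsq : Tendsto (fun n : ℕ => Real.sqrt (e n)) atTop (nhds 0) := by
      have h1 : Tendsto e atTop (nhds 0) := tendsto_one_div_add_atTop_nhds_zero_nat
      have h2 := (Real.continuous_sqrt.tendsto 0).comp h1
      rwa [Real.sqrt_zero] at h2
    exact squeeze_zero (fun n => norm_nonneg _) hb hsq
  exact tendsto_nhds_unique h2 h1


end OneAlg

section TwoAlg
variable {A B : Type*} [CStarAlgebra A] [PartialOrder A] [StarOrderedRing A]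
  [CStarAlgebra B] [PartialOrder B] [StarOrderedRing B]
  (φ : A →⋆ₐ[ℂ] B)

lemma phi_cont : Continuous φ :=
  AddMonoidHomClass.continuous_of_bound φ 1
    (fun a => by simpa using NonUnitalStarAlgHom.norm_apply_le φ a)

lemma phi_smul (μ : ℝ) (t : A) : φ (μ • t) = μ • φ t := by
  have h1 : μ • t = (μ : ℂ) • t := by
    rw [← smul_one_smul ℂ μ t, Complex.real_smul, mul_one]
  have h2 : μ • φ t = (μ : ℂ) • φ t := by
    rw [← smul_one_smul ℂ μ (φ t), Complex.real_smul, mul_one]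
  rw [h1, h2, map_smul]

lemma phi_nonneg {t : A} (ht : 0 ≤ t) : 0 ≤ φ t := by
  have h1 : φ t = star (φ (CFC.sqrt t)) * φ (CFC.sqrt t) := by
    rw [← map_star, ← map_mul, (IsSelfAdjoint.of_nonneg (CFC.sqrt_nonneg (a := t))).star_eq,
      CFC.sqrt_mul_sqrt_self t ht]
  rw [h1]
  exact star_mul_self_nonneg _

lemma phi_map_cfc (f : ℝ → ℝ) (hf : Continuous f) {t : A} (ht : IsSelfAdjoint t) :
    φ (cfc f t) = cfc f (φ t) :=
  StarAlgHom.map_cfc φ f t hf.continuousOn (phi_cont φ) ht (ht.map φ)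

lemma posLift (hφ : Surjective φ) {d : B} (hd : 0 ≤ d) : ∃ w : A, 0 ≤ w ∧ φ w = d := by
  obtain ⟨z, hz⟩ := hφ (CFC.sqrt d)
  refine ⟨star z * z, star_mul_self_nonneg z, ?_⟩
  rw [map_mul, map_star, hz, (IsSelfAdjoint.of_nonneg (CFC.sqrt_nonneg (a := d))).star_eq,
    CFC.sqrt_mul_sqrt_self d hd]

lemma herLift (hφ : Surjective φ) {t : A} (ht : 0 ≤ t) {d : B} (hd : 0 ≤ d) {μ : ℝ}
    (hμ : 0 < μ) (hdle : d ≤ μ • φ t) :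
    ∃ s : A, 0 ≤ s ∧ φ s = d ∧
      ∀ y : A, y * t = 0 → t * y = 0 → y * s = 0 ∧ s * y = 0 := by
  set t' := μ • t with ht'def
  have ht' : 0 ≤ t' := smul_nonneg'' hμ.le ht
  have ht'sa : IsSelfAdjoint t' := IsSelfAdjoint.of_nonneg ht'
  have hφt' : φ t' = μ • φ t := phi_smul φ μ t
  have hφt'0 : 0 ≤ φ t' := phi_nonneg φ ht'
  have hdsa : IsSelfAdjoint (CFC.sqrt d) := IsSelfAdjoint.of_nonneg (CFC.sqrt_nonneg _)
  have hle : star (CFC.sqrt d) * CFC.sqrt d ≤ φ t' := by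
    rw [hdsa.star_eq, CFC.sqrt_mul_sqrt_self d hd, hφt']
    exact hdle
  obtain ⟨u, hu⟩ := pedersen hφt'0 hle
  have hQsa : IsSelfAdjoint (cfc myQ (φ t')) := cfc_predicate myQ (φ t')
  have hd2 : d = cfc myQ (φ t') * (star u * u) * cfc myQ (φ t') := by
    conv_lhs => rw [← CFC.sqrt_mul_sqrt_self d hd]
    nth_rewrite 1 [← hdsa.star_eq]
    rw [hu, star_mul, hQsa.star_eq]
    simp [mul_assoc]
  obtain ⟨w, hw0, hwφ⟩ := posLift φ hφ (star_mul_self_nonneg u)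
  set r := cfc myQ t' with hrdef
  have hrsa : IsSelfAdjoint r := cfc_predicate myQ t'
  have hφr : φ r = cfc myQ (φ t') := phi_map_cfc φ myQ myQ_cont ht'sa
  refine ⟨r * w * r, ?_, ?_, ?_⟩
  · have hwsa : IsSelfAdjoint (CFC.sqrt w) := IsSelfAdjoint.of_nonneg (CFC.sqrt_nonneg _)
    have : r * w * r = star (CFC.sqrt w * r) * (CFC.sqrt w * r) := by
      rw [star_mul, hwsa.star_eq, hrsa.star_eq]
      rw [show r * CFC.sqrt w * (CFC.sqrt w * r) = r * (CFC.sqrt w * CFC.sqrt w) * r by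
        simp [mul_assoc]]
      rw [CFC.sqrt_mul_sqrt_self w hw0]
    rw [this]
    exact star_mul_self_nonneg _
  · rw [map_mul, map_mul, hφr, hwφ, ← hd2]
  · intro y hyt hty
    have hyt' : y * t' = 0 := by rw [ht'def, mul_smul_comm, hyt, smul_zero]
    have hty' : t' * y = 0 := by rw [ht'def, smul_mul_assoc, hty, smul_zero]
    have hyr : y * r = 0 := by
      rw [hrdef, cfc_myQ_eq ht']
      exact mul_sqrt_zero (CFC.sqrt_nonneg _) (mul_sqrt_zero ht' hyt')
    have hry : r * y = 0 := by
      rw [hrdef, cfc_myQ_eq ht']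
      exact sqrt_mul_zero (CFC.sqrt_nonneg _) (sqrt_mul_zero ht' hty')
    constructor
    · rw [show y * (r * w * r) = y * r * (w * r) by simp [mul_assoc], hyr, zero_mul]
    · rw [mul_assoc, hry, mul_zero]

end TwoAlg

section Step
variable {A B : Type*} [CStarAlgebra A] [PartialOrder A] [StarOrderedRing A]
  [CStarAlgebra B] [PartialOrder B] [StarOrderedRing B]
  (φ : A →⋆ₐ[ℂ] B)

lemma abs_of_orth {b c : B} (hb : 0 ≤ b) (hc : 0 ≤ c) (hbc : b * c = 0) :
    cfc (fun s : ℝ => |s|) (b - c) = b + c := by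
  have hbsa : IsSelfAdjoint b := IsSelfAdjoint.of_nonneg hb
  have hcsa : IsSelfAdjoint c := IsSelfAdjoint.of_nonneg hc
  have hcb : c * b = 0 := by
    have := congrArg star hbc
    rwa [star_mul, hbsa.star_eq, hcsa.star_eq, star_zero] at this
  have hsa : IsSelfAdjoint (b - c) := hbsa.sub hcsa
  rw [cfc_abs_eq_sqrt hsa]
  refine CFC.sqrt_unique ?_ (add_nonneg hb hc)
  have : (b + c) * (b + c) = b * b + c * c := by
    rw [add_mul, mul_add, mul_add, hbc, hcb]; abel
  rw [this]
  have : (b - c) * (b - c) = b * b + c * c := by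
    rw [sub_mul, mul_sub, mul_sub, hbc, hcb]; abel
  rw [this]

lemma step (hφ : Surjective φ) {t : A} (ht : 0 ≤ t) {b c : B} (hb : 0 ≤ b) (hc : 0 ≤ c)
    (hbc : b * c = 0) {μ : ℝ} (hμ : 0 < μ) (hble : b ≤ μ • φ t) (hcle : c ≤ μ • φ t) :
    ∃ a t' : A, 0 ≤ a ∧ 0 ≤ t' ∧ φ a = b ∧ φ t' = c ∧ a * t' = 0 ∧ t' * a = 0 ∧
      ∀ y : A, y * t = 0 → t * y = 0 →
        (y * a = 0 ∧ a * y = 0 ∧ y * t' = 0 ∧ t' * y = 0) := by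
  obtain ⟨sb, hsb0, hsbφ, hsbC⟩ := herLift φ hφ ht hb hμ hble
  obtain ⟨sc, hsc0, hscφ, hscC⟩ := herLift φ hφ ht hc hμ hcle
  set h := sb - sc with hdef
  have hh : IsSelfAdjoint h := (IsSelfAdjoint.of_nonneg hsb0).sub (IsSelfAdjoint.of_nonneg hsc0)
  have hφh : φ h = b - c := by rw [hdef, map_sub, hsbφ, hscφ]
  set m := cfc (fun s : ℝ => |s|) h with hmdef
  have habs : Continuous (fun s : ℝ => |s|) := continuous_abs
  have hma : m + h = cfc (fun s : ℝ => |s| + s) h := by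
    rw [cfc_add (a := h) (fun s : ℝ => |s|) (fun s : ℝ => s) habs.continuousOn (by fun_prop),
      cfc_id' ℝ h hh]
  have hms : m - h = cfc (fun s : ℝ => |s| - s) h := by
    rw [cfc_sub (fun s : ℝ => |s|) (fun s : ℝ => s) h habs.continuousOn (by fun_prop),
      cfc_id' ℝ h hh]
  refine ⟨(1/2 : ℝ) • (m + h), (1/2 : ℝ) • (m - h), ?_, ?_, ?_, ?_, ?_, ?_, ?_⟩
  · exact smul_nonneg'' (by norm_num) (hma ▸ cfc_nonneg fun s _ => by
      have := neg_abs_le s; linarith)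
  · exact smul_nonneg'' (by norm_num) (hms ▸ cfc_nonneg fun s _ => by
      have := le_abs_self s; linarith)
  · rw [phi_smul φ, map_add, hmdef, phi_map_cfc φ _ habs hh, hφh,
      abs_of_orth hb hc hbc]
    rw [show b + c + (b - c) = b + b by abel, ← two_smul ℝ b, smul_smul]
    norm_num
  · rw [phi_smul φ, map_sub, hmdef, phi_map_cfc φ _ habs hh, hφh,
      abs_of_orth hb hc hbc]
    rw [show b + c - (b - c) = c + c by abel, ← two_smul ℝ c, smul_smul]
    norm_num
  · rw [smul_mul_smul_comm, hma, hms,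
      ← cfc_mul _ _ h (by fun_prop) (by fun_prop)]
    rw [show (fun s : ℝ => (|s| + s) * (|s| - s)) = fun s : ℝ => 0 from funext fun s => by
      linear_combination abs_mul_abs_self s]
    simp
  · rw [smul_mul_smul_comm, hma, hms,
      ← cfc_mul _ _ h (by fun_prop) (by fun_prop)]
    rw [show (fun s : ℝ => (|s| - s) * (|s| + s)) = fun s : ℝ => 0 from funext fun s => by
      linear_combination abs_mul_abs_self s]
    simp
  · intro y hyt hty
    obtain ⟨hysb, hsby⟩ := hsbC y hyt hty
    obtain ⟨hysc, hscy⟩ := hscC y hyt hty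
    have hyh : y * h = 0 := by rw [hdef, mul_sub, hysb, hysc, sub_zero]
    have hhy : h * y = 0 := by rw [hdef, sub_mul, hsby, hscy, sub_zero]
    have hsq : 0 ≤ h * h := by
      nth_rewrite 1 [← hh.star_eq]
      exact star_mul_self_nonneg h
    have hym : y * m = 0 := by
      rw [hmdef, cfc_abs_eq_sqrt hh]
      exact mul_sqrt_zero hsq (by rw [← mul_assoc, hyh, zero_mul])
    have hmy : m * y = 0 := by
      rw [hmdef, cfc_abs_eq_sqrt hh]
      exact sqrt_mul_zero hsq (by rw [mul_assoc, hhy, mul_zero])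
    refine ⟨?_, ?_, ?_, ?_⟩ <;>
      simp [mul_smul_comm, smul_mul_assoc, mul_add, add_mul, mul_sub, sub_mul,
        hym, hyh, hmy, hhy]
end Step


/-- Kadison–Ringrose, Exercise 4.6.20: pairwise orthogonal positive sequences
lift along surjective *-homomorphisms of C*-algebras. -/
theorem stmt6 {A B : Type*}
    [NormedRing A] [StarRing A] [CStarRing A] [CompleteSpace A]
    [NormedAlgebra ℂ A] [StarModule ℂ A] [PartialOrder A] [StarOrderedRing A]
    [NormedRing B] [StarRing B] [CStarRing B] [CompleteSpace B]
    [NormedAlgebra ℂ B] [StarModule ℂ B] [PartialOrder B] [StarOrderedRing B]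
    (φ : A →⋆ₐ[ℂ] B) (hφ : Function.Surjective φ)
    (b : ℕ → B) (hb : ∀ j, 0 ≤ b j) (horth : ∀ j k, j ≠ k → b j * b k = 0) :
    ∃ a : ℕ → A, (∀ j, 0 ≤ a j) ∧ (∀ j k, j ≠ k → a j * a k = 0) ∧
      ∀ j, φ (a j) = b j := by
  classical
  letI : CStarAlgebra A :=
    { ‹NormedRing A›, ‹StarRing A›, ‹CStarRing A›, ‹NormedAlgebra ℂ A›,
      ‹StarModule ℂ A›, ‹CompleteSpace A› with }
  letI : CStarAlgebra B :=
    { ‹NormedRing B›, ‹StarRing B›, ‹CStarRing B›, ‹NormedAlgebra ℂ B›,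
      ‹StarModule ℂ B›, ‹CompleteSpace B› with }
  set r : ℕ → ℝ := fun j => ((2:ℝ)^j * (1 + ‖b j‖))⁻¹ with hrdef
  have hr_eq : ∀ j, r j = ((2:ℝ)^j * (1 + ‖b j‖))⁻¹ := fun j => rfl
  have hrpos : ∀ j, 0 < r j := fun j => by
    have h1 : (0:ℝ) < 1 + ‖b j‖ := by positivity
    rw [hr_eq]
    positivity
  set b' : ℕ → B := fun j => r j • b j with hb'def
  have hb'_eq : ∀ j, b' j = r j • b j := fun j => rfl
  have hb'0 : ∀ j, 0 ≤ b' j := fun j => smul_nonneg'' (hrpos j).le (hb j)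
  have hb'orth : ∀ j k, j ≠ k → b j * b' k = 0 := fun j k hjk => by
    rw [hb'_eq]
    simp only [mul_smul_comm, horth j k hjk, smul_zero]
  have hsum : Summable b' := by
    apply Summable.of_norm
    apply Summable.of_nonneg_of_le (fun j => norm_nonneg _) (fun j => ?_)
      (summable_geometric_of_lt_one (by norm_num : (0:ℝ) ≤ 1/2) (by norm_num))
    have h1 : (0:ℝ) < 1 + ‖b j‖ := by positivity
    rw [hb'_eq]
    rw [norm_smul, Real.norm_eq_abs, abs_of_pos (hrpos j)]
    have h3 : (1 + ‖b j‖)⁻¹ * ‖b j‖ ≤ 1 := by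
      rw [inv_mul_le_iff₀ h1, mul_one]
      linarith
    have h4 : ((1:ℝ)/2)^j = ((2:ℝ)^j)⁻¹ := by
      rw [one_div, inv_pow]
    rw [hr_eq, mul_inv, h4, mul_assoc]
    calc ((2:ℝ)^j)⁻¹ * ((1 + ‖b j‖)⁻¹ * ‖b j‖) ≤ ((2:ℝ)^j)⁻¹ * 1 :=
          mul_le_mul_of_nonneg_left h3 (by positivity)
      _ = ((2:ℝ)^j)⁻¹ := mul_one _
  set d : ℕ → B := fun n => ∑' k, b' (n + k) with hddef
  have hdsum : ∀ n, Summable fun k => b' (n + k) := fun n => by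
    have := (summable_nat_add_iff (f := b') n).mpr hsum
    simpa [add_comm] using this
  have hd0 : ∀ n, 0 ≤ d n := by
    intro n
    have hs : Filter.Tendsto (fun s : Finset ℕ => ∑ k ∈ s, b' (n + k)) Filter.atTop
        (nhds (d n)) := (hdsum n).hasSum
    exact (CStarAlgebra.isClosed_nonneg (A := B)).mem_of_tendsto hs
      (Filter.Eventually.of_forall fun s => by
        exact Finset.sum_nonneg fun k _ => hb'0 _)
  have hdsplit : ∀ n, d n = b' n + d (n + 1) := by
    intro n
    have h1 := Summable.tsum_eq_zero_add (hdsum n)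
    rw [hddef]
    simp only []
    rw [h1, add_zero]
    congr 1
    exact tsum_congr fun k => by rw [show n + (k + 1) = (n + 1) + k by omega]
  have hborth_d : ∀ j n, j < n → b j * d n = 0 := by
    intro j n hjn
    have h2 := (hdsum n).hasSum.mul_left (b j)
    have h3 : (fun k : ℕ => b j * b' (n + k)) = fun _ => 0 :=
      funext fun k => hb'orth j (n + k) (by omega)
    rw [h3] at h2
    exact (hasSum_zero.unique h2).symm
  have hbrec : ∀ j, b j = (r j)⁻¹ • b' j := fun j => by
    rw [hb'_eq, smul_smul, inv_mul_cancel₀ (ne_of_gt (hrpos j)), one_smul]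
  have hμ1 : ∀ j, 1 ≤ (r j)⁻¹ := by
    intro j
    rw [hr_eq, inv_inv]
    have h1 : (1:ℝ) ≤ 2^j := one_le_pow₀ (by norm_num)
    nlinarith [norm_nonneg (b j)]
  have stepEx : ∀ n (t : A), 0 ≤ t → φ t = d n → ∃ p : A × A,
      (0 ≤ p.1 ∧ 0 ≤ p.2 ∧ φ p.1 = b n ∧ φ p.2 = d (n+1) ∧ p.1 * p.2 = 0 ∧ p.2 * p.1 = 0) ∧
      (∀ y : A, y * t = 0 → t * y = 0 →
        (y * p.1 = 0 ∧ p.1 * y = 0 ∧ y * p.2 = 0 ∧ p.2 * y = 0)) := by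
    intro n t ht hφt
    have hμpos : 0 < (r n)⁻¹ := inv_pos.mpr (hrpos n)
    have horth' : b n * d (n+1) = 0 := hborth_d n (n+1) (by omega)
    have hble : b n ≤ (r n)⁻¹ • φ t := by
      rw [hφt, hdsplit n, smul_add]
      nth_rewrite 1 [hbrec n]
      exact le_add_of_nonneg_right (smul_nonneg'' hμpos.le (hd0 (n+1)))
    have hcle : d (n+1) ≤ (r n)⁻¹ • φ t := by
      rw [hφt, hdsplit n, smul_add]
      have key : 0 ≤ ((r n)⁻¹ - 1) • d (n+1) :=
        smul_nonneg'' (sub_nonneg.mpr (hμ1 n)) (hd0 (n+1))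
      have h2 : (r n)⁻¹ • d (n+1) - d (n+1) = ((r n)⁻¹ - 1) • d (n+1) := by
        rw [sub_smul, one_smul]
      have h1 : d (n+1) ≤ (r n)⁻¹ • d (n+1) := sub_nonneg.mp (h2 ▸ key)
      exact h1.trans (le_add_of_nonneg_left (smul_nonneg'' hμpos.le (hb'0 n)))
    obtain ⟨a', t', h1, h2, h3, h4, h5, h6, h7⟩ :=
      step φ hφ ht (hb n) (hd0 (n+1)) horth' hμpos hble hcle
    exact ⟨(a', t'), ⟨h1, h2, h3, h4, h5, h6⟩, h7⟩
  obtain ⟨t0, ht00, ht0φ⟩ := posLift φ hφ (hd0 0)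
  set Inv : ℕ → A × A → Prop := fun n p => 0 ≤ p.1 ∧ 0 ≤ p.2 ∧ φ p.1 = b n ∧
    φ p.2 = d (n+1) ∧ p.1 * p.2 = 0 ∧ p.2 * p.1 = 0 with hInvdef
  set Rel : A → A × A → Prop := fun t p => ∀ y : A, y * t = 0 → t * y = 0 →
    (y * p.1 = 0 ∧ p.1 * y = 0 ∧ y * p.2 = 0 ∧ p.2 * y = 0) with hReldef
  have stepEx' : ∀ n (t : A), 0 ≤ t → φ t = d n → ∃ p : A × A, Inv n p ∧ Rel t p := by
    intro n t ht hφt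
    obtain ⟨p, h1, h2⟩ := stepEx n t ht hφt
    exact ⟨p, h1, h2⟩
  set next : ℕ → A × A → A × A := fun n p =>
    if h : 0 ≤ p.2 ∧ φ p.2 = d (n+1) then Classical.choose (stepEx' (n+1) p.2 h.1 h.2)
    else (0, 0) with hnextdef
  set F : ℕ → A × A := fun n =>
    Nat.rec (Classical.choose (stepEx' 0 t0 ht00 ht0φ)) next n with hFdef
  have hF0 : Inv 0 (F 0) := (Classical.choose_spec (stepEx' 0 t0 ht00 ht0φ)).1
  have hFsucc : ∀ n, Inv n (F n) → Inv (n+1) (F (n+1)) ∧ Rel (F n).2 (F (n+1)) := by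
    intro n hInv
    have hcond : 0 ≤ (F n).2 ∧ φ (F n).2 = d (n+1) := ⟨hInv.2.1, hInv.2.2.2.1⟩
    have hF1 : F (n+1) = next n (F n) := rfl
    rw [hF1, hnextdef]
    simp only [dif_pos hcond]
    exact Classical.choose_spec (stepEx' (n+1) (F n).2 hcond.1 hcond.2)
  have hInvAll : ∀ n, Inv n (F n) := by
    intro n
    induction n with
    | zero => exact hF0
    | succ n ih => exact (hFsucc n ih).1
  have hRel : ∀ n, Rel (F n).2 (F (n+1)) := fun n => (hFsucc n (hInvAll n)).2
  have hprop : ∀ n j, j ≤ n → (F j).1 * (F n).2 = 0 ∧ (F n).2 * (F j).1 = 0 := by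
    intro n
    induction n with
    | zero =>
      intro j hj
      have hj0 : j = 0 := Nat.le_zero.mp hj
      subst hj0
      exact ⟨(hInvAll 0).2.2.2.2.1, (hInvAll 0).2.2.2.2.2⟩
    | succ n ih =>
      intro j hj
      rcases Nat.lt_or_ge j (n+1) with hlt | hge
      · obtain ⟨h1, h2⟩ := ih j (by omega)
        have h3 := hRel n (F j).1 h1 h2
        exact ⟨h3.2.2.1, h3.2.2.2⟩
      · have hj1 : j = n + 1 := by omega
        subst hj1
        exact ⟨(hInvAll (n+1)).2.2.2.2.1, (hInvAll (n+1)).2.2.2.2.2⟩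
  have horthA : ∀ j k, j < k → (F j).1 * (F k).1 = 0 ∧ (F k).1 * (F j).1 = 0 := by
    intro j k hjk
    obtain ⟨k', rfl⟩ : ∃ k', k = k' + 1 := ⟨k - 1, by omega⟩
    obtain ⟨h1, h2⟩ := hprop k' j (by omega)
    have h3 := hRel k' (F j).1 h1 h2
    exact ⟨h3.1, h3.2.1⟩
  refine ⟨fun n => (F n).1, fun n => (hInvAll n).1, ?_, fun n => (hInvAll n).2.2.1⟩
  intro j k hjk
  rcases lt_or_gt_of_ne hjk with h | h
  · exact (horthA j k h).1
  · exact (horthA k j h).2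
end

section
/- Let A be a C*-algebra, B a Banach algebra, M a Banach B-bimodule, and D₁ : A → M an (E, F, G, H)-derivation where E, H : A → M are linear and F, G : A → B are continuous at zero. Assume (G(ab) − G(a)G(b))H(c) = 0 for all a, b, c ∈ A. Then the set I = { a ∈ A : t ↦ D₁(at) is continuous } equals the set V = { a ∈ A : t ↦ G(a)H(t) is continuous }. -/
open MulOpposite

/-- under the hypothesis `(G(ab) - G(a)G(b))H(c) = 0`, the set
`I = { a | t ↦ D₁(at) is continuous }` equals `V = { a | t ↦ G(a)H(t) is continuous }`. -/
theorem stmt7 {A B M : Type*}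
    [NormedRing A] [StarRing A] [CStarRing A] [CompleteSpace A]
    [NormedAlgebra ℂ A] [StarModule ℂ A]
    [NormedRing B] [NormedAlgebra ℂ B] [CompleteSpace B]
    [NormedAddCommGroup M] [NormedSpace ℂ M] [CompleteSpace M]
    [Module B M] [Module Bᵐᵒᵖ M] [SMulCommClass B Bᵐᵒᵖ M]
    [SMulCommClass ℂ B M] [SMulCommClass ℂ Bᵐᵒᵖ M]
    [IsBoundedSMul B M] [IsBoundedSMul Bᵐᵒᵖ M]
    (D₁ E H : A → M) (F G : A → B)
    (hD₁ : IsLinearMap ℂ D₁) (hE : IsLinearMap ℂ E) (hH : IsLinearMap ℂ H)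
    (hF : ContinuousAt F 0) (hG : ContinuousAt G 0)
    (hid : ∀ a b : A, D₁ (a * b) = op (F b) • E a + G a • H b)
    (hGH : ∀ a b c : A, (G (a * b) - G a * G b) • H c = 0) :
    {a : A | Continuous fun t => D₁ (a * t)} =
      {a : A | Continuous fun t => G a • H t} := by
  ext a
  simp only [Set.mem_setOf_eq]
  have key : ∀ t : A, op (F t) • E a = D₁ (a * t) - G a • H t := by
    intro t
    rw [hid]; abel
  have hadd : ∀ s t : A, op (F (s + t)) • E a = op (F s) • E a + op (F t) • E a := by
    intro s t
    simp only [key, mul_add, hD₁.map_add, hH.map_add, smul_add]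
    abel
  let f : A →+ M := AddMonoidHom.mk' (fun t => op (F t) • E a) hadd
  have hφ0 : ContinuousAt f 0 := by
    have hc : Continuous fun b : B => op b • E a :=
      (MulOpposite.continuous_op.smul continuous_const)
    exact hc.continuousAt.comp hF
  have hφ : Continuous fun t => op (F t) • E a := continuous_of_continuousAt_zero f hφ0
  constructor
  · intro hI
    have : Continuous fun t => D₁ (a * t) - op (F t) • E a := hI.sub hφ
    convert this using 2 with t
    rw [hid]; abel
  · intro hV
    have : Continuous fun t => op (F t) • E a + G a • H t := hφ.add hV
    convert this using 2 with t
    rw [hid]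
end

section
/- Let A be a C*-algebra, B a Banach algebra, M a Banach B-bimodule, and D₁ : A → M an (E, F, G, H)-derivation with E, H linear and F, G continuous at zero, satisfying (G(ab) − G(a)G(b))H(c) = 0 for all a, b, c ∈ A. Then I = { a ∈ A : t ↦ D₁(at) is continuous } is a closed two-sided ideal of A. -/
open MulOpposite Filter Topology

/-- `I = { a | t ↦ D₁(at) is continuous }` is a closed two-sided ideal of `A`. -/
theorem stmt8 {A B M : Type*}
    [NormedRing A] [StarRing A] [CStarRing A] [CompleteSpace A]
    [NormedAlgebra ℂ A] [StarModule ℂ A]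
    [NormedRing B] [NormedAlgebra ℂ B] [CompleteSpace B]
    [NormedAddCommGroup M] [NormedSpace ℂ M] [CompleteSpace M]
    [Module B M] [Module Bᵐᵒᵖ M] [SMulCommClass B Bᵐᵒᵖ M]
    [SMulCommClass ℂ B M] [SMulCommClass ℂ Bᵐᵒᵖ M]
    [IsBoundedSMul B M] [IsBoundedSMul Bᵐᵒᵖ M]
    (D₁ E H : A → M) (F G : A → B)
    (hD₁ : IsLinearMap ℂ D₁) (hE : IsLinearMap ℂ E) (hH : IsLinearMap ℂ H)
    (hF : ContinuousAt F 0) (hG : ContinuousAt G 0)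
    (hid : ∀ a b : A, D₁ (a * b) = op (F b) • E a + G a • H b)
    (hGH : ∀ a b c : A, (G (a * b) - G a * G b) • H c = 0) :
    IsClosed {a : A | Continuous fun t => D₁ (a * t)} ∧
      (0 : A) ∈ {a : A | Continuous fun t => D₁ (a * t)} ∧
      (∀ a b : A, (Continuous fun t => D₁ (a * t)) → (Continuous fun t => D₁ (b * t)) →
        Continuous fun t => D₁ ((a + b) * t)) ∧
      (∀ (c : ℂ) (a : A), (Continuous fun t => D₁ (a * t)) →
        Continuous fun t => D₁ ((c • a) * t)) ∧
      (∀ a x : A, (Continuous fun t => D₁ (a * t)) → Continuous fun t => D₁ ((x * a) * t)) ∧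
      (∀ a x : A, (Continuous fun t => D₁ (a * t)) → Continuous fun t => D₁ ((a * x) * t)) := by
  have hD0 : D₁ 0 = 0 := hD₁.map_zero
  have hE0 : E 0 = 0 := hE.map_zero
  have hH0 : H 0 = 0 := hH.map_zero
  -- From the identity with `b = 0` : `op (F 0) • E a = 0`.
  have hFz : ∀ a : A, op (F 0) • E a = 0 := by
    intro a
    have h := hid a 0
    rw [mul_zero, hD0, hH0, smul_zero, add_zero] at h
    exact h.symm
  -- key rewriting: `G a • H t = D₁ (a*t) - op (F t) • E a`
  have key : ∀ a t : A, G a • H t = D₁ (a * t) - op (F t) • E a := by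
    intro a t; rw [hid a t]; abel
  -- `t ↦ op (F t) • E a` tends to `0` at `0`.
  have hFE : ∀ a : A, Tendsto (fun t => op (F t) • E a) (𝓝 0) (𝓝 0) := by
    intro a
    have h : ContinuousAt (fun t => op (F t) • E a) 0 :=
      ((continuous_op.continuousAt.comp hF).smul continuousAt_const)
    simpa [ContinuousAt, hFz a] using h
  -- the linear map `t ↦ D₁ (a * t)`
  have φlin : ∀ a : A, IsLinearMap ℂ (fun t => D₁ (a * t)) := by
    intro a
    constructor
    · intro t u; rw [mul_add, hD₁.map_add]
    · intro c t; rw [mul_smul_comm, hD₁.map_smul]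
  -- the linear map `t ↦ G a • H t`
  have χlin : ∀ a : A, IsLinearMap ℂ (fun t => G a • H t) := by
    intro a
    constructor
    · intro t u; rw [hH.map_add, smul_add]
    · intro c t; rw [hH.map_smul]; exact (smul_comm c (G a) (H t)).symm
  -- linearity in the other variable : `s ↦ G s • H t`
  have χlin' : ∀ t : A, IsLinearMap ℂ (fun s => G s • H t) := by
    intro t
    constructor
    · intro s u
      simp only [key, add_mul, hD₁.map_add, hE.map_add, smul_add]
      abel
    · intro c s
      simp only [key, smul_mul_assoc, hD₁.map_smul, hE.map_smul, smul_comm, smul_sub]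
  -- a linear map continuous at `0` is continuous
  have contOfAt0 : ∀ (f : A → M), IsLinearMap ℂ f → ContinuousAt f 0 → Continuous f := by
    intro f hf h0
    have := continuous_of_continuousAt_zero (hf.mk' f) h0
    exact this
  -- membership criterion
  have memiff : ∀ a : A, (Continuous fun t => D₁ (a * t)) ↔ Continuous (fun t => G a • H t) := by
    intro a
    constructor
    · intro h
      refine contOfAt0 _ (χlin a) ?_
      have h1 : Tendsto (fun t => D₁ (a * t)) (𝓝 0) (𝓝 0) := by
        have := h.continuousAt (x := 0)
        simpa [ContinuousAt, mul_zero, hD0] using this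
      have h2 : Tendsto (fun t => G a • H t) (𝓝 0) (𝓝 0) := by
        simpa [← key] using h1.sub (hFE a)
      simpa [ContinuousAt, hH0] using h2
    · intro h
      refine contOfAt0 _ (φlin a) ?_
      have h1 : Tendsto (fun t => G a • H t) (𝓝 0) (𝓝 0) := by
        have := h.continuousAt (x := 0)
        simpa [ContinuousAt, hH0] using this
      have h2 : Tendsto (fun t => D₁ (a * t)) (𝓝 0) (𝓝 0) := by
        have h3 := (hFE a).add h1
        rw [add_zero] at h3
        simpa [← hid] using h3
      simpa [ContinuousAt, mul_zero, hD0] using h2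
  refine ⟨?_, ?_, ?_, ?_, ?_, ?_⟩
  · -- closedness
    apply IsSeqClosed.isClosed
    intro u a hu hua
    rw [Set.mem_setOf_eq, memiff]
    have hcont : ∀ n, Continuous fun t => G (u n) • H t := fun n =>
      (memiff _).1 (hu n)
    -- bundle as continuous linear maps
    let ψ : ℕ → A →L[ℂ] M := fun n => ⟨(χlin (u n)).mk' _, hcont n⟩
    -- pointwise convergence
    have hptw : ∀ t : A, Tendsto (fun n => G (u n) • H t) atTop (𝓝 (G a • H t)) := by
      intro t
      have hc : Continuous (fun s => G s • H t) := by
        refine contOfAt0 _ (χlin' t) ?_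
        exact hG.smul continuousAt_const
      exact (hc.tendsto a).comp hua
    -- uniform boundedness
    obtain ⟨C, hC⟩ : ∃ C, ∀ n, ‖ψ n‖ ≤ C := by
      apply banach_steinhaus
      intro t
      have hb : BddAbove (Set.range fun n => ‖G (u n) • H t‖) :=
        ((hptw t).norm).bddAbove_range
      obtain ⟨C, hC⟩ := hb
      exact ⟨C, fun n => hC (Set.mem_range_self n)⟩
    -- the limit map is bounded, hence continuous
    have hbound : ∀ t : A, ‖G a • H t‖ ≤ C * ‖t‖ := by
      intro t
      refine le_of_tendsto' ((hptw t).norm) ?_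
      intro n
      calc ‖G (u n) • H t‖ = ‖ψ n t‖ := rfl
        _ ≤ ‖ψ n‖ * ‖t‖ := (ψ n).le_opNorm t
        _ ≤ C * ‖t‖ := by gcongr; exact hC n
    exact AddMonoidHomClass.continuous_of_bound ((χlin a).mk' _) C hbound
  · -- zero
    simp only [Set.mem_setOf_eq, zero_mul, hD0]
    exact continuous_const
  · -- addition
    intro a b ha hb
    simpa [add_mul, hD₁.map_add, Pi.add_def] using ha.add hb
  · -- scalar multiplication
    intro c a ha
    simpa [smul_mul_assoc, hD₁.map_smul, Pi.smul_def] using ha.const_smul c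
  · -- left ideal
    intro a x ha
    have h1 := (memiff a).1 ha
    have h2 : ∀ t, G (x * a) • H t = G x • (G a • H t) := by
      intro t
      have h := hGH x a t
      rw [sub_smul, sub_eq_zero] at h
      rw [h, mul_smul]
    rw [memiff]
    simpa [h2, Pi.smul_def] using h1.const_smul (G x)
  · -- right ideal
    intro a x ha
    simpa [mul_assoc, Function.comp_def] using ha.comp (continuous_mul_left x)
end

section
/- Let A be a C*-algebra, M a Banach bimodule over a Banach algebra B, and D₁ : A → M a linear map. Let I = { a ∈ A : t ↦ D₁(at) is continuous } and suppose I is a closed two-sided ideal of A. Then the restriction D₁|_I is continuous (bounded). -/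
open Filter Topology Polynomial

section Aux

variable {A : Type*} [CStarAlgebra A]

/-- A closed set which is closed under right multiplication and contains a selfadjoint
element `a` contains `cfc f a` for every continuous `f` vanishing at `0`. -/
lemma cfc_mem_of_isClosed [Nontrivial A] (S : Set A) (hS : IsClosed S)
    (hmul : ∀ a ∈ S, ∀ x : A, a * x ∈ S)
    {a : A} (haS : a ∈ S) (hsa : IsSelfAdjoint a)
    {f : ℝ → ℝ} (hf : Continuous f) (hf0 : f 0 = 0) : cfc f a ∈ S := by
  have key : ∀ n : ℕ, ∃ p : ℝ[X], p.coeff 0 = 0 ∧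
      ∀ x ∈ Set.Icc (-‖a‖) ‖a‖, |p.eval x - f x| ≤ 2 / (n + 1) := by
    intro n
    obtain ⟨p, hp⟩ := exists_polynomial_near_of_continuousOn (-‖a‖) ‖a‖ f hf.continuousOn
      (1 / (n + 1)) (by positivity)
    have h0mem : (0:ℝ) ∈ Set.Icc (-‖a‖) ‖a‖ :=
      ⟨neg_nonpos.2 (norm_nonneg a), norm_nonneg a⟩
    have hc0 : |p.coeff 0| < 1 / (n + 1) := by
      have := hp 0 h0mem
      rwa [hf0, sub_zero, ← Polynomial.coeff_zero_eq_eval_zero] at this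
    refine ⟨p - Polynomial.C (p.coeff 0), by simp, fun x hx => ?_⟩
    have h1 := hp x hx
    have h2 : (p - Polynomial.C (p.coeff 0)).eval x = p.eval x - p.coeff 0 := by simp
    rw [h2]
    have : |p.eval x - p.coeff 0 - f x| ≤ |p.eval x - f x| + |p.coeff 0| := by
      calc |p.eval x - p.coeff 0 - f x| = |(p.eval x - f x) + (-(p.coeff 0))| := by ring_nf
        _ ≤ |p.eval x - f x| + |-(p.coeff 0)| := abs_add_le _ _
        _ = |p.eval x - f x| + |p.coeff 0| := by rw [abs_neg]
    have h3 : (1:ℝ) / (n+1) + 1 / (n+1) = 2 / (n+1) := by ring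
    linarith
  choose p hp0 hp using key
  have hmem : ∀ n, (Polynomial.aeval a (p n) : A) ∈ S := by
    intro n
    obtain ⟨q, hq⟩ := Polynomial.X_dvd_iff.2 (hp0 n)
    rw [hq, map_mul, Polynomial.aeval_X]
    exact hmul a haS _
  have hspec : spectrum ℝ a ⊆ Set.Icc (-‖a‖) ‖a‖ := by
    intro x hx
    have := spectrum.norm_le_norm_of_mem hx
    rw [Real.norm_eq_abs, abs_le] at this
    exact this
  have hb : ∀ n : ℕ, ‖Polynomial.aeval a (p n) - cfc f a‖ ≤ 2 / (n + 1) := by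
    intro n
    rw [← cfc_polynomial (p n) a hsa,
      ← cfc_sub _ _ a ((p n).continuous).continuousOn hf.continuousOn]
    refine norm_cfc_le (by positivity) fun x hx => ?_
    have := hp n x (hspec hx)
    rw [Real.norm_eq_abs]
    simpa using this
  have htend : Tendsto (fun n => (Polynomial.aeval a (p n) : A)) atTop (𝓝 (cfc f a)) := by
    rw [tendsto_iff_norm_sub_tendsto_zero]
    have h2 : Tendsto (fun n : ℕ => 2 / ((n:ℝ) + 1)) atTop (𝓝 0) := by
      have := tendsto_one_div_add_atTop_nhds_zero_nat.const_mul (2:ℝ)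
      simpa [mul_one_div, div_eq_mul_inv] using this
    exact squeeze_zero (fun n => norm_nonneg _) hb h2
  exact hS.mem_of_tendsto htend (Eventually.of_forall hmem)

variable [Nontrivial A] [PartialOrder A] [StarOrderedRing A]

/-- Key norm bound: if `x * x* ≤ b ^ 4` then `‖cfc h b * x‖` is controlled by
`sup_{t ∈ σ(b)} |h t| t²`. -/
lemma norm_cfc_mul_le (b x : A) (hb : 0 ≤ b) (hx : x * star x ≤ b ^ 4)
    (h : ℝ → ℝ) (hh : Continuous h) (c : ℝ) (hc : 0 ≤ c)
    (hbound : ∀ t ∈ spectrum ℝ b, (h t) ^ 2 * t ^ 4 ≤ c ^ 2) :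
    ‖cfc h b * x‖ ≤ c := by
  have hsa : IsSelfAdjoint b := .of_nonneg hb
  set z := cfc h b with hz
  have hzsa : IsSelfAdjoint z := cfc_predicate h b
  have h2 : (z * x) * star (z * x) = z * (x * star x) * z := by
    rw [star_mul, hzsa.star_eq]; noncomm_ring
  have h3 : z * (x * star x) * z ≤ z * b ^ 4 * z := by
    simpa [hzsa.star_eq] using star_left_conjugate_le_conjugate hx z
  have h4 : 0 ≤ z * (x * star x) * z := h2 ▸ mul_star_self_nonneg (z * x)
  have h6 : z * b ^ 4 * z = cfc (fun t => h t * t ^ 4 * h t) b := by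
    conv_lhs => rw [← cfc_pow_id (R := ℝ) b 4 hsa]
    rw [hz, ← cfc_mul _ _ b hh.continuousOn (by fun_prop),
      ← cfc_mul _ _ b (by fun_prop) hh.continuousOn]
  have h7 : ‖z * (x * star x) * z‖ ≤ c ^ 2 := by
    refine (CStarAlgebra.norm_le_norm_of_nonneg_of_le h4 h3).trans ?_
    rw [h6]
    refine norm_cfc_le (by positivity) fun t ht => ?_
    have h8 := hbound t ht
    rw [Real.norm_eq_abs, show h t * t ^ 4 * h t = h t ^ 2 * t ^ 4 from by ring,
      abs_of_nonneg (by positivity)]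
    exact h8
  have h9 : ‖z * x‖ ^ 2 ≤ c ^ 2 := by
    calc ‖z * x‖ ^ 2 = ‖(z * x) * star (z * x)‖ := by
          rw [CStarRing.norm_self_mul_star]; ring
      _ = ‖z * (x * star x) * z‖ := by rw [h2]
      _ ≤ c ^ 2 := h7
  nlinarith [norm_nonneg (z * x)]

private lemma amgm_aux {ε t : ℝ} (hε : 0 < ε) (ht : 0 ≤ t) :
    t * ε / (t ^ 2 + ε) ≤ Real.sqrt ε / 2 := by
  rw [div_le_div_iff₀ (by positivity) two_pos]
  have h1 : Real.sqrt ε ^ 2 = ε := Real.sq_sqrt hε.le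
  nlinarith [mul_nonneg (Real.sqrt_nonneg ε) (sq_nonneg (t - Real.sqrt ε)),
    Real.sqrt_nonneg ε, ht]

/-- Factorization: if `x * x* ≤ b ^ 4` with `b ≥ 0`, then `x = b * c` for some `c`
with `‖c‖ ≤ ‖b‖`. -/
lemma exists_factor (b x : A) (hb : 0 ≤ b) (hx : x * star x ≤ b ^ 4) :
    ∃ c : A, x = b * c ∧ ‖c‖ ≤ ‖b‖ := by
  have hsa : IsSelfAdjoint b := .of_nonneg hb
  set g : ℕ → ℝ → ℝ := fun n t => t / (t ^ 2 + 1 / (n + 1)) with hgdef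
  have hgc : ∀ n : ℕ, Continuous (g n) := fun n =>
    continuous_id.div (by continuity) (fun t => by positivity)
  set u : ℕ → A := fun n => cfc (g n) b * x with hu
  have hspec : ∀ t ∈ spectrum ℝ b, 0 ≤ t ∧ t ≤ ‖b‖ := by
    intro t ht
    refine ⟨spectrum_nonneg_of_nonneg hb ht, ?_⟩
    have := spectrum.norm_le_norm_of_mem ht
    rw [Real.norm_eq_abs, abs_le] at this
    exact this.2
  -- uniform norm bound on the `u n`
  have hub : ∀ n, ‖u n‖ ≤ ‖b‖ := by
    intro n
    refine norm_cfc_mul_le b x hb hx (g n) (hgc n) ‖b‖ (norm_nonneg b) fun t ht => ?_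
    obtain ⟨ht0, htb⟩ := hspec t ht
    have hε : (0:ℝ) < 1 / (n + 1) := by positivity
    have h1 : g n t * t ^ 2 ≤ t := by
      rw [hgdef]; dsimp only
      rw [div_mul_eq_mul_div, div_le_iff₀ (by positivity)]
      nlinarith
    have hnn : 0 ≤ g n t := by rw [hgdef]; dsimp only; positivity
    calc (g n t) ^ 2 * t ^ 4 = (g n t * t ^ 2) ^ 2 := by ring
      _ ≤ ‖b‖ ^ 2 := by nlinarith [norm_nonneg b, mul_nonneg hnn (sq_nonneg t)]
  -- Cauchy sequence
  have hgmul : ∀ (n : ℕ) (t : ℝ), 0 ≤ t →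
      g n t * t ^ 2 = t - t * (1 / (n + 1)) / (t ^ 2 + 1 / (n + 1)) := by
    intro n t _
    have hε : (0:ℝ) < 1 / (n + 1) := by positivity
    rw [hgdef]; dsimp only
    field_simp
    ring
  have hcau : CauchySeq u := by
    refine cauchySeq_of_le_tendsto_0 (fun N : ℕ => Real.sqrt (1 / (N + 1))) ?_ ?_
    · intro n m N hn hm
      rw [dist_eq_norm]
      have hsub : u n - u m = cfc (fun t => g n t - g m t) b * x := by
        rw [hu]; dsimp only
        rw [← sub_mul, ← cfc_sub _ _ b (hgc n).continuousOn (hgc m).continuousOn]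
      rw [hsub]
      refine norm_cfc_mul_le b x hb hx _ ((hgc n).sub (hgc m)) _ (Real.sqrt_nonneg _)
        fun t ht => ?_
      obtain ⟨ht0, _⟩ := hspec t ht
      set εN : ℝ := 1 / (N + 1) with hεN
      have hεNpos : (0:ℝ) < εN := by positivity
      have hEbound : ∀ k : ℕ, N ≤ k →
          t * (1 / (k + 1)) / (t ^ 2 + 1 / (k + 1)) ≤ Real.sqrt εN / 2 := by
        intro k hk
        have hε : (0:ℝ) < 1 / (k + 1) := by positivity
        refine (amgm_aux hε ht0).trans ?_
        have : (1:ℝ) / (k + 1) ≤ εN := by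
          rw [hεN]
          apply one_div_le_one_div_of_le (by positivity)
          exact_mod_cast add_le_add_left (Nat.cast_le.2 hk) 1
        have := Real.sqrt_le_sqrt this
        linarith
      have hEnn : ∀ k : ℕ, 0 ≤ t * (1 / (k + 1)) / (t ^ 2 + 1 / (k + 1)) := by
        intro k
        have hε : (0:ℝ) < 1 / (k + 1) := by positivity
        positivity
      set w : ℝ := (g n t - g m t) * t ^ 2 with hw
      have hwval : w = t * (1 / (m + 1)) / (t ^ 2 + 1 / (m + 1))
          - t * (1 / (n + 1)) / (t ^ 2 + 1 / (n + 1)) := by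
        rw [hw, sub_mul, hgmul n t ht0, hgmul m t ht0]
        ring
      have habs : |w| ≤ Real.sqrt εN / 2 := by
        rw [hwval, abs_le]
        constructor
        · have := hEbound n hn
          have := hEnn m
          linarith
        · have := hEbound m hm
          have := hEnn n
          linarith
      have hsq : w ^ 2 ≤ εN := by
        have h1 : w ^ 2 ≤ (Real.sqrt εN / 2) ^ 2 := by
          nlinarith [sq_abs w, abs_nonneg w]
        have h2 : (Real.sqrt εN / 2) ^ 2 = εN / 4 := by
          rw [div_pow, Real.sq_sqrt hεNpos.le]; norm_num
        linarith
      calc (g n t - g m t) ^ 2 * t ^ 4 = w ^ 2 := by rw [hw]; ring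
        _ ≤ εN := hsq
        _ = Real.sqrt εN ^ 2 := (Real.sq_sqrt hεNpos.le).symm
    · have h0 : Tendsto (fun N : ℕ => (1:ℝ) / (N + 1)) atTop (𝓝 0) :=
        tendsto_one_div_add_atTop_nhds_zero_nat
      have := h0.sqrt
      simpa using this
  obtain ⟨c, hc⟩ := cauchySeq_tendsto_of_complete hcau
  have h1 : Tendsto (fun n => b * u n) atTop (𝓝 (b * c)) := hc.const_mul b
  have h2 : Tendsto (fun n => b * u n) atTop (𝓝 x) := by
    rw [tendsto_iff_norm_sub_tendsto_zero]
    have hkey : ∀ n : ℕ, ‖b * u n - x‖ ≤ 1 / (n + 1) := by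
      intro n
      have hε : (0:ℝ) < 1 / (n + 1) := by positivity
      have hb1 : b * u n - x = cfc (fun t => t * g n t - 1) b * x := by
        have e1 : cfc (fun t : ℝ => t * g n t - 1) b = b * cfc (g n) b - 1 := by
          rw [cfc_sub (fun t : ℝ => t * g n t) (fun _ : ℝ => 1) b (by fun_prop) (by fun_prop),
            cfc_mul (fun t : ℝ => t) (g n) b continuous_id.continuousOn (hgc n).continuousOn,
            cfc_id' ℝ b hsa, cfc_const_one ℝ b hsa]
        rw [hu]; dsimp only
        rw [e1, sub_mul, one_mul, mul_assoc]
      rw [hb1]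
      refine norm_cfc_mul_le b x hb hx _ (by fun_prop) _ hε.le fun t ht => ?_
      obtain ⟨ht0, _⟩ := hspec t ht
      set ε : ℝ := 1 / ((n:ℝ) + 1) with hεdef
      have hεpos : (0:ℝ) < ε := by rw [hεdef]; positivity
      have hq : (0:ℝ) < t ^ 2 + ε := by positivity
      have he : t * g n t - 1 = -(ε / (t ^ 2 + ε)) := by
        rw [hgdef]; dsimp only
        rw [← hεdef]
        field_simp
        ring
      rw [he]
      have hr : ε / (t ^ 2 + ε) * t ^ 2 ≤ ε := by
        rw [div_mul_eq_mul_div, div_le_iff₀ hq]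
        nlinarith
      have hrn : 0 ≤ ε / (t ^ 2 + ε) := by positivity
      calc (-(ε / (t ^ 2 + ε))) ^ 2 * t ^ 4
          = (ε / (t ^ 2 + ε) * t ^ 2) ^ 2 := by ring
        _ ≤ ε ^ 2 := by nlinarith [mul_nonneg hrn (sq_nonneg t)]
    refine squeeze_zero (fun n => norm_nonneg _) hkey ?_
    exact tendsto_one_div_add_atTop_nhds_zero_nat
  have hxbc : x = b * c := tendsto_nhds_unique h2 h1
  refine ⟨c, hxbc, ?_⟩
  exact le_of_tendsto hc.norm (Eventually.of_forall hub)

end Aux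

/-- if `I = { a | t ↦ D₁(at) is continuous }` is a closed two-sided ideal of
the C*-algebra `A`, then the restriction of the linear map `D₁` to `I` is bounded. -/
theorem stmt9 {A M : Type*}
    [NormedRing A] [StarRing A] [CStarRing A] [CompleteSpace A]
    [NormedAlgebra ℂ A] [StarModule ℂ A]
    [NormedAddCommGroup M] [NormedSpace ℂ M] [CompleteSpace M]
    (D₁ : A → M) (hD₁ : IsLinearMap ℂ D₁)
    (hclosed : IsClosed {a : A | Continuous fun t => D₁ (a * t)})
    (hadd : ∀ a b : A, (Continuous fun t => D₁ (a * t)) → (Continuous fun t => D₁ (b * t)) →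
      Continuous fun t => D₁ ((a + b) * t))
    (hsmul : ∀ (c : ℂ) (a : A), (Continuous fun t => D₁ (a * t)) →
      Continuous fun t => D₁ ((c • a) * t))
    (hleft : ∀ a x : A, (Continuous fun t => D₁ (a * t)) → Continuous fun t => D₁ ((x * a) * t))
    (hright : ∀ a x : A, (Continuous fun t => D₁ (a * t)) → Continuous fun t => D₁ ((a * x) * t)) :
    ∃ C : ℝ, ∀ a : A, (Continuous fun t => D₁ (a * t)) → ‖D₁ a‖ ≤ C * ‖a‖ := by
  classical
  letI : CStarAlgebra A := { }
  rcases subsingleton_or_nontrivial A with hA | hA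
  · refine ⟨0, fun a _ => ?_⟩
    rw [Subsingleton.elim a 0, hD₁.map_zero]
    simp
  letI : PartialOrder A := CStarAlgebra.spectralOrder A
  haveI : StarOrderedRing A := CStarAlgebra.spectralOrderedRing A
  by_contra hcon
  push_neg at hcon
  have hzero : Continuous fun t : A => D₁ ((0:A) * t) := by
    simp only [zero_mul, hD₁.map_zero]
    exact continuous_const
  -- construct the bad sequence
  have hseq : ∀ n : ℕ, ∃ a : A, (Continuous fun t => D₁ (a * t)) ∧
      ‖a‖ = (2⁻¹:ℝ) ^ n ∧ (2:ℝ) ^ n < ‖D₁ a‖ := by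
    intro n
    obtain ⟨a, ha, hlt⟩ := hcon ((4:ℝ) ^ n)
    have ha0 : a ≠ 0 := by
      rintro rfl
      rw [hD₁.map_zero] at hlt
      simp at hlt
    have hna : 0 < ‖a‖ := norm_pos_iff.2 ha0
    set r : ℝ := (2⁻¹:ℝ) ^ n / ‖a‖ with hr
    have hrpos : 0 < r := by positivity
    refine ⟨((r:ℂ)) • a, hsmul _ a ha, ?_, ?_⟩
    · rw [norm_smul, Complex.norm_real, Real.norm_eq_abs, abs_of_pos hrpos, hr,
        div_mul_cancel₀ _ hna.ne']
    · rw [hD₁.map_smul, norm_smul, Complex.norm_real, Real.norm_eq_abs, abs_of_pos hrpos]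
      have h4 : (4:ℝ) ^ n * ‖a‖ < ‖D₁ a‖ := hlt
      have key : r * ((4:ℝ) ^ n * ‖a‖) = (2:ℝ) ^ n := by
        have h2 : (2⁻¹:ℝ) ^ n * (4:ℝ) ^ n = (2:ℝ) ^ n := by
          rw [← mul_pow]; norm_num
        rw [hr, div_mul_eq_mul_div, mul_div_assoc, mul_div_cancel_right₀ _ hna.ne', h2]
      have := mul_lt_mul_of_pos_left h4 hrpos
      linarith
  choose a haI hanorm haD using hseq
  -- the element s = ∑ aₙ aₙ*
  have hsum : Summable (fun n => a n * star (a n)) := by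
    refine Summable.of_norm_bounded
      (summable_geometric_of_lt_one (by norm_num : (0:ℝ) ≤ 4⁻¹) (by norm_num)) fun n => ?_
    calc ‖a n * star (a n)‖ ≤ ‖a n‖ * ‖star (a n)‖ := norm_mul_le _ _
      _ = (2⁻¹:ℝ) ^ n * (2⁻¹:ℝ) ^ n := by rw [norm_star, hanorm]
      _ = (4⁻¹:ℝ) ^ n := by rw [← mul_pow]; norm_num
  set s : A := ∑' n, a n * star (a n) with hs
  have hterm : ∀ k, Continuous fun t => D₁ ((a k * star (a k)) * t) :=
    fun k => hright _ _ (haI k)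
  have hs_mem : Continuous fun t => D₁ (s * t) := by
    have hpartial : ∀ n : ℕ,
        Continuous fun t => D₁ ((∑ i ∈ Finset.range n, a i * star (a i)) * t) := by
      intro n
      induction n with
      | zero => simpa using hzero
      | succ n ih => rw [Finset.sum_range_succ]; exact hadd _ _ ih (hterm n)
    exact hclosed.mem_of_tendsto hsum.hasSum.tendsto_sum_nat (Eventually.of_forall hpartial)
  have hs_nonneg : 0 ≤ s := tsum_nonneg fun n => mul_star_self_nonneg _
  have hs_sa : IsSelfAdjoint s := .of_nonneg hs_nonneg
  have hle : ∀ k, a k * star (a k) ≤ s :=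
    fun k => Summable.le_tsum hsum k fun j _ => mul_star_self_nonneg _
  -- the fourth root b of s
  set b₁ : A := cfc Real.sqrt s with hb₁def
  have hb₁nn : 0 ≤ b₁ := cfc_nonneg fun t _ => Real.sqrt_nonneg t
  have hb₁sa : IsSelfAdjoint b₁ := .of_nonneg hb₁nn
  have hb₁sq : b₁ * b₁ = s := by
    rw [hb₁def, ← cfc_mul _ _ s Real.continuous_sqrt.continuousOn
      Real.continuous_sqrt.continuousOn,
      cfc_congr (fun t ht => Real.mul_self_sqrt (spectrum_nonneg_of_nonneg hs_nonneg ht))]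
    exact cfc_id ℝ s hs_sa
  set b : A := cfc Real.sqrt b₁ with hbdef
  have hbnn : 0 ≤ b := cfc_nonneg fun t _ => Real.sqrt_nonneg t
  have hbsq : b * b = b₁ := by
    rw [hbdef, ← cfc_mul _ _ b₁ Real.continuous_sqrt.continuousOn
      Real.continuous_sqrt.continuousOn,
      cfc_congr (fun t ht => Real.mul_self_sqrt (spectrum_nonneg_of_nonneg hb₁nn ht))]
    exact cfc_id ℝ b₁ hb₁sa
  have hb4 : b ^ 4 = s := by
    rw [show b ^ 4 = (b * b) * (b * b) from by
      rw [pow_succ, pow_succ, pow_succ, pow_one, mul_assoc], hbsq, hb₁sq]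
  -- b belongs to the ideal
  set I : Set A := {a : A | Continuous fun t => D₁ (a * t)} with hIdef
  have hImul : ∀ a ∈ I, ∀ x : A, a * x ∈ I := fun a ha x => hright a x ha
  have hb₁I : b₁ ∈ I :=
    cfc_mem_of_isClosed I hclosed hImul hs_mem hs_sa Real.continuous_sqrt Real.sqrt_zero
  have hbI : b ∈ I :=
    cfc_mem_of_isClosed I hclosed hImul hb₁I hb₁sa Real.continuous_sqrt Real.sqrt_zero
  -- the continuous linear map t ↦ D₁ (b t)
  let L : A →L[ℂ] M :=
    { toLinearMap :=
      { toFun := fun t => D₁ (b * t)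
        map_add' := fun t t' => by
          show D₁ (b * (t + t')) = D₁ (b * t) + D₁ (b * t')
          rw [mul_add, hD₁.map_add]
        map_smul' := fun c t => by
          show D₁ (b * (c • t)) = c • D₁ (b * t)
          rw [mul_smul_comm, hD₁.map_smul] }
      cont := hbI }
  -- uniform bound on ‖D₁ (a n)‖, contradiction
  have hbound : ∀ n : ℕ, (2:ℝ) ^ n < ‖L‖ * ‖b‖ := by
    intro n
    obtain ⟨c, hc_eq, hc_norm⟩ := exists_factor b (a n) hbnn (by rw [hb4]; exact hle n)
    have h1 : ‖D₁ (a n)‖ = ‖L c‖ := by rw [hc_eq]; rfl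
    have h2 : ‖L c‖ ≤ ‖L‖ * ‖c‖ := L.le_opNorm c
    have h3 : ‖L‖ * ‖c‖ ≤ ‖L‖ * ‖b‖ := mul_le_mul_of_nonneg_left hc_norm (norm_nonneg L)
    calc (2:ℝ) ^ n < ‖D₁ (a n)‖ := haD n
      _ = ‖L c‖ := h1
      _ ≤ ‖L‖ * ‖b‖ := h2.trans h3
  obtain ⟨n, hn⟩ := pow_unbounded_of_one_lt (‖L‖ * ‖b‖) (one_lt_two (α := ℝ))
  exact absurd (hbound n) (not_lt.2 hn.le)
end
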